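/- Let R be an operator on V⊗V satisfying the braid equation R₁₂R₂₃R₁₂ = R₂₃R₁₂R₂₃, and set R₁₃ := R₁₂R₂₃R₁₂. Define P_Γ = (R₁₂−q)(R₂₃−1) and P_L = (R₂₃−q)(R₁₂−1) on V⊗V⊗V. Then R₁₃ P_L = P_Γ R₁₃. -/
import Mathlib


open TensorProduct

variable {k : Type*} [Field k] {V : Type*} [AddCommGroup V] [Module k V]

/-- The operator `R ⊗ id` acting on `V ⊗ V ⊗ V` (associated as `V ⊗ (V ⊗ V)`). -/
noncomputable def R₁₂ (R : Module.End k (V ⊗[k] V)) :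
    Module.End k (V ⊗[k] (V ⊗[k] V)) :=
  (TensorProduct.assoc k V V V).toLinearMap ∘ₗ
    TensorProduct.map R LinearMap.id ∘ₗ (TensorProduct.assoc k V V V).symm.toLinearMap

/-- The operator `id ⊗ R` acting on `V ⊗ V ⊗ V`. -/
noncomputable def R₂₃ (R : Module.End k (V ⊗[k] V)) :
    Module.End k (V ⊗[k] (V ⊗[k] V)) :=
  TensorProduct.map LinearMap.id R

lemma braid_aux {k : Type*} [CommRing k] {A : Type*} [Ring A] [Algebra k A]
    (a b : A) (q : k) (h : a * b * a = b * a * b) :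
    (a * b * a) * ((b - q • 1) * (a - 1)) = ((a - q • 1) * (b - 1)) * (a * b * a) := by
  have key : (a * b * a) * ((b - q • 1) * (a - 1)) - ((a - q • 1) * (b - 1)) * (a * b * a)
      = (a * (a * b * a) - a * (b * a * b)) + q • ((b * a * b) * a - (a * b * a) * a) := by
    simp only [smul_sub]; noncomm_ring
  have h0 : (a * b * a) * ((b - q • 1) * (a - 1)) - ((a - q • 1) * (b - 1)) * (a * b * a) = 0 := by
    rw [key, h]; simp
  linear_combination (norm := noncomm_ring) h0

theorem stmt_3 (R : Module.End k (V ⊗[k] V)) (q : k)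
    (hbraid : R₁₂ R * R₂₃ R * R₁₂ R = R₂₃ R * R₁₂ R * R₂₃ R) :
    (R₁₂ R * R₂₃ R * R₁₂ R) * ((R₂₃ R - q • 1) * (R₁₂ R - 1)) =
      ((R₁₂ R - q • 1) * (R₂₃ R - 1)) * (R₁₂ R * R₂₃ R * R₁₂ R) := by
  exact braid_aux (R₁₂ R) (R₂₃ R) q hbraid
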